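/- arXiv:2209.13010 — 5 statements merged into one kernel-verified Lean document; each statement's English description precedes it below -/
import Mathlib

section
/- Let p be a prime, e ≥ 0 and k ≥ 1 integers, and let r = gcd(k, e+1). Then σ_k(p^e) ≡ r·(p^{e+1}−1)/(p^r−1) (mod σ(p^e)). -/
open Finset

private lemma pow_mod_eq' {R : Type*} [Monoid R] (y : R) (m : ℕ) (hy : y ^ m = 1) (a : ℕ) :
    y ^ a = y ^ (a % m) := by
  conv_lhs => rw [← Nat.div_add_mod a m]
  rw [pow_add, pow_mul, hy, one_pow, one_mul]

private lemma mod_inv_key {m u v : ℕ} (hm : 1 < m) (huv : u * v % m = 1) (a : ℕ) :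
    v * (u * a % m) % m = a % m := by
  have h1 : v * (u * a % m) ≡ (u * v) * a [MOD m] := by
    calc v * (u * a % m) ≡ v * (u * a) [MOD m] := (Nat.mod_modEq _ _).mul_left v
      _ = (u * v) * a := by ring
  have h2 : (u * v) * a ≡ 1 * a [MOD m] := by
    refine Nat.ModEq.mul_right a ?_
    show u * v % m = 1 % m
    rw [huv, Nat.mod_eq_of_lt hm]
  have := h1.trans h2
  simpa [Nat.ModEq] using this

private lemma core2 {R : Type*} [CommRing R] (y : R) (k' m' : ℕ) (hm' : 0 < m')
    (hco : Nat.Coprime k' m') (hy : y ^ m' = 1) :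
    ∑ i ∈ range m', y ^ (k' * i) = ∑ i ∈ range m', y ^ i := by
  rcases eq_or_lt_of_le (show 1 ≤ m' from hm') with h1 | h1
  · simp [← h1]
  · obtain ⟨t, -, ht⟩ := Nat.exists_mul_mod_eq_one_of_coprime hco h1
    have ht' : t * k' % m' = 1 := by rwa [mul_comm]
    calc ∑ i ∈ range m', y ^ (k' * i) = ∑ i ∈ range m', y ^ (k' * i % m') := by
          exact Finset.sum_congr rfl fun i _ => pow_mod_eq' y m' hy _
      _ = ∑ i ∈ range m', y ^ i := by
          refine Finset.sum_nbij' (fun a => k' * a % m') (fun b => t * b % m') ?_ ?_ ?_ ?_ ?_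
          · intro a _; exact Finset.mem_range.mpr (Nat.mod_lt _ hm')
          · intro a _; exact Finset.mem_range.mpr (Nat.mod_lt _ hm')
          · intro a ha
            have := mod_inv_key h1 ht a
            rwa [Nat.mod_eq_of_lt (Finset.mem_range.mp ha)] at this
          · intro a ha
            have := mod_inv_key h1 ht' a
            rwa [Nat.mod_eq_of_lt (Finset.mem_range.mp ha)] at this
          · intro a _; rfl

private lemma core {R : Type*} [CommRing R] (x : R) (k m : ℕ) (hk : 0 < k) (hm : 0 < m)
    (hx : x ^ m = 1) :
    ∑ i ∈ range m, x ^ (k * i)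
      = (Nat.gcd k m : R) * ∑ j ∈ range (m / Nat.gcd k m), x ^ (Nat.gcd k m * j) := by
  set r := Nat.gcd k m with hrdef
  have hr : 0 < r := Nat.gcd_pos_of_pos_left _ hk
  set m' := m / r with hm'def
  set k' := k / r with hk'def
  have hmm : r * m' = m := Nat.mul_div_cancel' (Nat.gcd_dvd_right k m)
  have hkk : r * k' = k := Nat.mul_div_cancel' (Nat.gcd_dvd_left k m)
  have hm' : 0 < m' := by
    rcases Nat.eq_zero_or_pos m' with h | h
    · rw [h, mul_zero] at hmm; omega
    · exact h
  have hco : Nat.Coprime k' m' := Nat.coprime_div_gcd_div_gcd hr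
  have hxkm' : x ^ (k * m') = 1 := by
    have h : k * m' = m * k' := by rw [← hmm, ← hkk]; ring
    rw [h, pow_mul, hx, one_pow]
  have step : ∀ c, ∑ i ∈ range (c * m'), x ^ (k * i)
      = (c : R) * ∑ i ∈ range m', x ^ (k * i) := by
    intro c
    induction c with
    | zero => simp
    | succ c ih =>
      rw [Nat.succ_mul, Finset.sum_range_add, ih]
      have hper : ∀ j, x ^ (k * (c * m' + j)) = x ^ (k * j) := by
        intro j
        have h : k * (c * m' + j) = (k * m') * c + k * j := by ring
        rw [h, pow_add, pow_mul, hxkm', one_pow, one_mul]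
      rw [Finset.sum_congr rfl fun j _ => hper j]
      push_cast
      ring
  have h1 : ∑ i ∈ range m, x ^ (k * i) = (r : R) * ∑ i ∈ range m', x ^ (k * i) := by
    rw [← hmm] at hm ⊢
    exact step r
  rw [h1]
  congr 1
  -- ∑ i ∈ range m', x ^ (k * i) = ∑ j ∈ range m', x ^ (r * j)
  have hy : (x ^ r) ^ m' = 1 := by rw [← pow_mul, hmm, hx]
  calc ∑ i ∈ range m', x ^ (k * i) = ∑ i ∈ range m', (x ^ r) ^ (k' * i) := by
        refine Finset.sum_congr rfl fun i _ => ?_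
        rw [← pow_mul, ← mul_assoc, hkk]
    _ = ∑ i ∈ range m', (x ^ r) ^ i := core2 (x ^ r) k' m' hm' hco hy
    _ = ∑ j ∈ range m', x ^ (r * j) := by
        refine Finset.sum_congr rfl fun i _ => ?_
        rw [← pow_mul]

theorem sigma_k_pow_mod (p e k : ℕ) (hp : p.Prime) (hk : 1 ≤ k)
    (r : ℕ) (hr : r = Nat.gcd k (e + 1)) :
    ArithmeticFunction.sigma k (p ^ e) ≡ r * ((p ^ (e + 1) - 1) / (p ^ r - 1)) [MOD ArithmeticFunction.sigma 1 (p ^ e)] := by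
  subst hr
  set m := e + 1 with hmdef
  set r := Nat.gcd k m with hrdef
  set q := ArithmeticFunction.sigma 1 (p ^ e) with hq
  have hm : 0 < m := Nat.succ_pos e
  have hrpos : 0 < r := Nat.gcd_pos_of_pos_right _ hm
  have hrdvd : r ∣ m := Nat.gcd_dvd_right k m
  set n := m / r with hndef
  have hrn : r * n = m := Nat.mul_div_cancel' hrdvd
  have hqs : q = ∑ i ∈ range m, p ^ i := ArithmeticFunction.sigma_one_apply_prime_pow hp
  -- geometric sum identity over ℕ
  have hpr1 : 1 ≤ p ^ r := Nat.one_le_pow _ _ hp.pos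
  have hpm1 : 1 ≤ p ^ m := Nat.one_le_pow _ _ hp.pos
  have hgeom : p ^ m - 1 = (p ^ r - 1) * ∑ j ∈ range n, p ^ (r * j) := by
    have key := geom_sum_mul ((p : ℤ) ^ r) n
    rw [← pow_mul, hrn] at key
    zify [hpr1, hpm1]
    have hs : (∑ j ∈ range n, (p : ℤ) ^ (r * j)) = ∑ j ∈ range n, ((p : ℤ) ^ r) ^ j :=
      Finset.sum_congr rfl fun j _ => by rw [← pow_mul]
    rw [hs, mul_comm ((p : ℤ) ^ r - 1), key]
  have hdiv : (p ^ m - 1) / (p ^ r - 1) = ∑ j ∈ range n, p ^ (r * j) := by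
    rw [hgeom]
    have hpos : 0 < p ^ r - 1 := by
      have : 1 < p ^ r := Nat.one_lt_pow hrpos.ne' hp.one_lt
      omega
    exact Nat.mul_div_cancel_left _ hpos
  have hσ : ArithmeticFunction.sigma k (p ^ e) = ∑ i ∈ range m, p ^ (k * i) := by
    rw [ArithmeticFunction.sigma_apply_prime_pow hp]
    exact Finset.sum_congr rfl fun i _ => by rw [mul_comm]
  rw [← ZMod.natCast_eq_natCast_iff, hσ, hdiv]
  -- work in ZMod q
  have hsum0 : (∑ i ∈ range m, (p : ZMod q) ^ i) = 0 := by
    have h0 : ((∑ i ∈ range m, p ^ i : ℕ) : ZMod q) = 0 := by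
      rw [← hqs]; exact ZMod.natCast_self q
    push_cast at h0
    exact h0
  have hx : (p : ZMod q) ^ m = 1 := by
    have key := geom_sum_mul (p : ZMod q) m
    rw [hsum0, zero_mul] at key
    have := sub_eq_zero.mp key.symm
    exact this
  push_cast
  exact core (p : ZMod q) k m hk hm hx
end

section
/- Let p be a prime and e ≥ 0, k ≥ 1 integers with gcd(k, e+1) = 1. Then σ(p^e) divides σ_k(p^e). -/
open Finset

lemma sum_pow_mul_mod (p m N : ℕ) (hN : 0 < N) (hm : Nat.Coprime m N) :
    ∑ i ∈ Finset.range N, p ^ (i * m % N) = ∑ i ∈ Finset.range N, p ^ i := by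
  rcases eq_or_lt_of_le (show 1 ≤ N from hN) with h1 | h1
  · simp [← h1]
  obtain ⟨m', -, hm'⟩ := Nat.exists_mul_mod_eq_one_of_coprime hm h1
  have hmm : m * m' ≡ 1 [MOD N] := by
    show m * m' % N = 1 % N
    rw [hm', Nat.mod_eq_of_lt h1]
  refine Finset.sum_nbij' (fun i => i * m % N) (fun j => j * m' % N) ?_ ?_ ?_ ?_ ?_
  · intro a _; exact Finset.mem_range.mpr (Nat.mod_lt _ hN)
  · intro a _; exact Finset.mem_range.mpr (Nat.mod_lt _ hN)
  · intro a ha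
    show a * m % N * m' % N = a
    rw [Nat.mod_mul_mod, mul_assoc]
    rw [show a * (m * m') % N = a * 1 % N from Nat.ModEq.mul_left a hmm,
      mul_one, Nat.mod_eq_of_lt (Finset.mem_range.mp ha)]
  · intro a ha
    show a * m' % N * m % N = a
    rw [Nat.mod_mul_mod, mul_assoc]
    rw [mul_comm m' m, show a * (m * m') % N = a * 1 % N from Nat.ModEq.mul_left a hmm,
      mul_one, Nat.mod_eq_of_lt (Finset.mem_range.mp ha)]
  · intro a _; rfl

theorem sigma_dvd_sigma_k_pow (p e k : ℕ) (hp : p.Prime) (hk : 1 ≤ k)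
    (h : Nat.gcd k (e + 1) = 1) :
    ArithmeticFunction.sigma 1 (p ^ e) ∣ ArithmeticFunction.sigma k (p ^ e) := by
  have hN : 0 < e + 1 := Nat.succ_pos e
  set N := e + 1 with hNdef
  rw [ArithmeticFunction.sigma_apply, ArithmeticFunction.sigma_apply,
    Nat.sum_divisors_prime_pow hp, Nat.sum_divisors_prime_pow hp]
  simp only [pow_one, ← pow_mul]
  -- goal: ∑ i ∈ range N, p ^ i ∣ ∑ i ∈ range N, p ^ (i * k)
  set A : ℕ := ∑ i ∈ Finset.range N, p ^ i with hA
  rw [← Int.natCast_dvd_natCast]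
  push_cast
  have hAZ : (A : ℤ) = ∑ i ∈ Finset.range N, (p : ℤ) ^ i := by push_cast [hA]; rfl
  have h1 : (A : ℤ) ∣ (p : ℤ) ^ N - 1 := ⟨(p : ℤ) - 1, by rw [hAZ, geom_sum_mul]⟩
  have hmod : (p : ℤ) ^ N ≡ 1 [ZMOD (A : ℤ)] := (Int.modEq_iff_dvd.mpr h1).symm
  have hpow : ∀ i : ℕ, (p : ℤ) ^ (i * k) ≡ (p : ℤ) ^ (i * k % N) [ZMOD (A : ℤ)] := by
    intro i
    conv_lhs => rw [← Nat.div_add_mod (i * k) N, pow_add, pow_mul]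
    calc ((p : ℤ) ^ N) ^ (i * k / N) * (p : ℤ) ^ (i * k % N)
        ≡ 1 ^ (i * k / N) * (p : ℤ) ^ (i * k % N) [ZMOD (A : ℤ)] :=
          (hmod.pow _).mul_right _
      _ = (p : ℤ) ^ (i * k % N) := by rw [one_pow, one_mul]
  have hsum : (∑ i ∈ Finset.range N, (p : ℤ) ^ (i * k)) ≡
      (∑ i ∈ Finset.range N, (p : ℤ) ^ (i * k % N)) [ZMOD (A : ℤ)] := by
    show _ % _ = _ % _
    rw [Finset.sum_int_mod, Finset.sum_int_mod _ _ (fun i => (p : ℤ) ^ (i * k % N))]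
    congr 1
    exact Finset.sum_congr rfl (fun i _ => hpow i)
  have hnat : (∑ i ∈ Finset.range N, p ^ (i * k % N)) = A := by
    rw [hA]; exact sum_pow_mul_mod p k N hN h
  have hfinal : (∑ i ∈ Finset.range N, (p : ℤ) ^ (i * k)) ≡ (A : ℤ) [ZMOD (A : ℤ)] := by
    refine hsum.trans ?_
    have : (∑ i ∈ Finset.range N, (p : ℤ) ^ (i * k % N)) = (A : ℤ) := by
      rw [← hnat]; push_cast; rfl
    rw [this]
  have := (Int.modEq_iff_dvd.mp hfinal.symm)
  have h2 : (A : ℤ) ∣ ∑ i ∈ Finset.range N, (p : ℤ) ^ (i * k) :=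
    (dvd_sub_right (dvd_refl _)).mp (by simpa using this)
  convert h2 using 2 <;> push_cast <;> ring_nf
end

section
/- If m is a multiperfect number, i.e., m divides σ(m), and k ≥ 1 is an integer with gcd(k, τ(m)) = 1, then m divides σ_k(m). -/
open Finset

lemma sigma_one_dvd_sigma_k_prime_pow (p b k : ℕ) (hp : p.Prime)
    (hco : Nat.Coprime k (b + 1)) :
    ArithmeticFunction.sigma 1 (p ^ b) ∣ ArithmeticFunction.sigma k (p ^ b) := by
  rcases Nat.eq_zero_or_pos b with rfl | hb
  · simp [ArithmeticFunction.sigma_apply]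
  set n := b + 1 with hn
  have hn1 : 1 < n := by omega
  set A := ArithmeticFunction.sigma 1 (p ^ b) with hA
  have hAdef : A = ∑ j ∈ range n, p ^ j := ArithmeticFunction.sigma_one_apply_prime_pow hp
  have hApos : 0 < A := by
    rw [hAdef]
    exact Finset.sum_pos (fun i _ => Nat.pow_pos hp.pos)
      ⟨0, Finset.mem_range.mpr (by omega)⟩
  haveI : NeZero A := ⟨hApos.ne'⟩
  rw [← ZMod.natCast_eq_zero_iff]
  have hgeom : ((∑ j ∈ range n, p ^ j : ℕ) : ZMod A) = 0 := by
    rw [← hAdef]; exact ZMod.natCast_self A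
  push_cast at hgeom
  -- p ^ n = 1 in ZMod A
  have hpow : (p : ZMod A) ^ n = 1 := by
    have := geom_sum_mul (p : ZMod A) n
    rw [hgeom, zero_mul] at this
    have : (p : ZMod A) ^ n - 1 = 0 := this.symm
    linear_combination this
  -- inverse of k mod n
  obtain ⟨k', -, hk'⟩ := Nat.exists_mul_mod_eq_one_of_coprime hco hn1
  have hkk' : k * k' % n = 1 := hk'
  -- rewrite σ k
  rw [ArithmeticFunction.sigma_apply_prime_pow hp]
  push_cast
  have hterm : ∀ j, (p : ZMod A) ^ (j * k) = (p : ZMod A) ^ (j * k % n) :=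
    fun j => pow_eq_pow_mod _ hpow
  calc ∑ j ∈ range n, (p : ZMod A) ^ (j * k)
      = ∑ j ∈ range n, (p : ZMod A) ^ (j * k % n) := by
        exact Finset.sum_congr rfl fun j _ => hterm j
    _ = ∑ j ∈ range n, (p : ZMod A) ^ j := by
        refine Finset.sum_nbij' (fun j => j * k % n) (fun j => j * k' % n) ?_ ?_ ?_ ?_ ?_
        · intro a _; exact Finset.mem_range.mpr (Nat.mod_lt _ (by omega))
        · intro a _; exact Finset.mem_range.mpr (Nat.mod_lt _ (by omega))
        · intro a ha
          show a * k % n * k' % n = a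
          have h1 : a * k % n * k' % n = a * (k * k') % n := by
            rw [Nat.mod_mul_mod, mul_assoc]
          rw [h1, Nat.mul_mod, hkk', mul_one, Nat.mod_mod_of_dvd _ dvd_rfl,
            Nat.mod_eq_of_lt (Finset.mem_range.mp ha)]
        · intro a ha
          show a * k' % n * k % n = a
          have h1 : a * k' % n * k % n = a * (k * k') % n := by
            rw [Nat.mod_mul_mod, mul_assoc, mul_comm k' k]
          rw [h1, Nat.mul_mod, hkk', mul_one, Nat.mod_mod_of_dvd _ dvd_rfl,
            Nat.mod_eq_of_lt (Finset.mem_range.mp ha)]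
        · intro a _; rfl
    _ = 0 := hgeom

theorem multiperfect_dvd_sigma_k (m k : ℕ) (hm : 0 < m) (hmp : m ∣ ArithmeticFunction.sigma 1 m)
    (hk : 1 ≤ k) (h : Nat.gcd k (ArithmeticFunction.sigma 0 m) = 1) :
    m ∣ ArithmeticFunction.sigma k m := by
  have H : ∀ n : ℕ, 0 < n → Nat.Coprime k (ArithmeticFunction.sigma 0 n) →
      ArithmeticFunction.sigma 1 n ∣ ArithmeticFunction.sigma k n := by
    intro n
    induction n using Nat.recOnPosPrimePosCoprime with
    | prime_pow p a hp ha =>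
      intro _ hco
      rw [ArithmeticFunction.sigma_zero_apply_prime_pow hp] at hco
      exact sigma_one_dvd_sigma_k_prime_pow p a k hp hco
    | zero => intro h0; omega
    | one => intro _ _; simp [ArithmeticFunction.sigma_apply]
    | coprime a b ha hb hab iha ihb =>
      intro _ hco
      have hmul1 := (ArithmeticFunction.isMultiplicative_sigma (k := 1)).map_mul_of_coprime hab
      have hmulk := (ArithmeticFunction.isMultiplicative_sigma (k := k)).map_mul_of_coprime hab
      have hmul0 := (ArithmeticFunction.isMultiplicative_sigma (k := 0)).map_mul_of_coprime hab
      rw [hmul0] at hco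
      rw [hmul1, hmulk]
      exact mul_dvd_mul
        (iha (by omega) (Nat.Coprime.coprime_dvd_right (dvd_mul_right _ _) hco))
        (ihb (by omega) (Nat.Coprime.coprime_dvd_right (dvd_mul_left _ _) hco))
  exact hmp.trans (H m hm h)
end

section
/- If m is a multiperfect number (m divides σ(m)) whose number of divisors τ(m) is a power of 2, then m divides σ_k(m) for every odd integer k ≥ 1. -/
open Finset ArithmeticFunction
open scoped ArithmeticFunction.sigma

private lemma geom_split (x t : ℕ) :
    ∑ i ∈ range (2 ^ t), x ^ i = ∏ s ∈ range t, (1 + x ^ (2 ^ s)) := by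
  induction t with
  | zero => simp
  | succ t ih =>
      rw [pow_succ, mul_two, Finset.sum_range_add, prod_range_succ, ← ih]
      have : ∀ i ∈ range (2 ^ t), x ^ (2 ^ t + i) = x ^ (2 ^ t) * x ^ i := by
        intro i _; rw [pow_add]
      rw [Finset.sum_congr rfl this, ← Finset.mul_sum]
      ring

private lemma sigma_pp_dvd {p : ℕ} (hp : p.Prime) {e t k : ℕ} (he : e + 1 = 2 ^ t)
    (hk : Odd k) : σ 1 (p ^ e) ∣ σ k (p ^ e) := by
  have h1 : σ 1 (p ^ e) = ∏ s ∈ range t, (1 + p ^ (2 ^ s)) := by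
    rw [sigma_apply, Nat.sum_divisors_prime_pow hp, he, ← geom_split]
    simp [pow_one]
  have h2 : σ k (p ^ e) = ∏ s ∈ range t, (1 + (p ^ (2 ^ s)) ^ k) := by
    rw [sigma_apply, Nat.sum_divisors_prime_pow hp, he]
    have : ∀ i ∈ range (2 ^ t), (p ^ i) ^ k = (p ^ k) ^ i := by
      intro i _; rw [← pow_mul, ← pow_mul, mul_comm]
    rw [Finset.sum_congr rfl this, geom_split]
    refine Finset.prod_congr rfl fun s _ => ?_
    rw [← pow_mul, ← pow_mul, mul_comm]
  rw [h1, h2]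
  refine Finset.prod_dvd_prod_of_dvd _ _ fun s _ => ?_
  have := Odd.nat_add_dvd_pow_add_pow (p ^ (2 ^ s)) 1 hk
  simpa [add_comm] using this

theorem multiperfect_dvd_sigma_odd (m : ℕ) (hm : 0 < m) (hmp : m ∣ ArithmeticFunction.sigma 1 m)
    (j : ℕ) (hj : ArithmeticFunction.sigma 0 m = 2 ^ j) :
    ∀ k : ℕ, 1 ≤ k → Odd k → m ∣ ArithmeticFunction.sigma k m := by
  intro k _ hk
  refine hmp.trans ?_
  have hm0 : m ≠ 0 := hm.ne'
  rw [isMultiplicative_sigma.multiplicative_factorization (σ 1) hm0,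
    isMultiplicative_sigma.multiplicative_factorization (σ k) hm0]
  rw [Finsupp.prod, Finsupp.prod]
  refine Finset.prod_dvd_prod_of_dvd _ _ fun p hp => ?_
  have hpp : p.Prime := Nat.prime_of_mem_primeFactors (by
    rwa [Nat.support_factorization] at hp)
  -- e + 1 divides 2 ^ j
  have hdvd : (m.factorization p + 1) ∣ 2 ^ j := by
    rw [← hj, sigma_zero_apply, Nat.card_divisors hm0]
    exact Finset.dvd_prod_of_mem _ hp
  obtain ⟨t, _, ht⟩ := (Nat.dvd_prime_pow Nat.prime_two).mp hdvd
  exact sigma_pp_dvd hpp ht hk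
end

section
/- If m > 1 is a squarefree integer such that m divides σ(m), then m = 6. -/
theorem squarefree_multiperfect_eq_six (m : ℕ) (hm : 1 < m) (hsf : Squarefree m)
    (h : m ∣ ArithmeticFunction.sigma 1 m) : m = 6 := by
  have hprod : ∏ p ∈ m.primeFactors, p = m := Nat.prod_primeFactors_of_squarefree hsf
  have hsigma : ArithmeticFunction.sigma 1 m = ∏ p ∈ m.primeFactors, (p + 1) := by
    conv_lhs => rw [← hprod]
    rw [ArithmeticFunction.IsMultiplicative.map_prod_of_prime
      ArithmeticFunction.isMultiplicative_sigma m.primeFactors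
      (fun p hp => Nat.prime_of_mem_primeFactors hp)]
    refine Finset.prod_congr rfl fun p hp => ?_
    have hpp := Nat.prime_of_mem_primeFactors hp
    rw [ArithmeticFunction.sigma_one_apply, hpp.divisors]
    rw [Finset.sum_pair hpp.one_lt.ne]
    omega
  have hne : m.primeFactors.Nonempty := Nat.nonempty_primeFactors.mpr hm
  set P := m.primeFactors with hP
  set p := P.max' hne with hpdef
  have hpP : p ∈ P := P.max'_mem hne
  have hpp : p.Prime := Nat.prime_of_mem_primeFactors hpP
  have hpd : p ∣ ∏ q ∈ P, (q + 1) :=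
    dvd_trans (Nat.dvd_of_mem_primeFactors hpP) (hsigma ▸ h)
  obtain ⟨q, hqP, hq⟩ := hpp.prime.exists_mem_finset_dvd hpd
  have hqp : q ≤ p := P.le_max' q hqP
  have hqprime : q.Prime := Nat.prime_of_mem_primeFactors hqP
  have h1 : p ≤ q + 1 := Nat.le_of_dvd (by omega) hq
  have hqne : q ≠ p := by
    intro heq
    rw [heq] at hq
    have : p ∣ 1 := (Nat.dvd_add_right dvd_rfl).mp hq
    exact hpp.one_lt.ne' (Nat.eq_one_of_dvd_one this)
  have hq1 : q + 1 = p := by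
    rcases Nat.lt_or_ge (q + 1) p with hlt | hge
    · omega
    · omega
  have hq2 : q = 2 := by
    by_contra hne2
    have hodd : Odd q := hqprime.odd_of_ne_two hne2
    have heven : Even p := by
      obtain ⟨k, hk⟩ := hodd
      exact ⟨k + 1, by omega⟩
    have hp2 : p = 2 := (Nat.Prime.even_iff hpp).mp heven
    have : 2 ≤ q := hqprime.two_le
    omega
  have hp3 : p = 3 := by omega
  have hPeq : P = {2, 3} := by
    ext r
    simp only [Finset.mem_insert, Finset.mem_singleton]
    constructor
    · intro hr
      have hrp : r.Prime := Nat.prime_of_mem_primeFactors hr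
      have hrle : r ≤ p := P.le_max' r hr
      have hr3 : r ≤ 3 := by omega
      have := hrp.two_le
      interval_cases r
      · left; rfl
      · right; rfl
    · rintro (rfl | rfl)
      · rwa [← hq2]
      · rwa [← hp3]
  rw [← hprod, hPeq]
  decide
end
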